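/- Let M ⊆ ℤ^12 be the additive submonoid generated by the 22 vectors v_1,…,v_22 listed in the context (all finite ℕ-linear combinations of these vectors). Then the set of irreducible elements of M is exactly {v_1,…,v_22}. -/

import Mathlib

/-- The 22 Hilbert basis vectors `v_1,…,v_22 ∈ ℤ^12 = ℤ^8 × ℤ^4` of the (model of the)
Knutson-Tao-Goncharov-Shen positive integer cone of the triangulated ideal square. -/
def vZ : Fin 22 → Fin 12 → ℤ :=
  ![![1, 0, 0, 0, 0, 0, 0, 0, 0, 0, 0, 0],
    ![0, 1, 0, 0, 0, 0, 0, 0, 0, 0, 0, 0],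
    ![0, 0, 1, 0, 0, 0, 0, 0, 0, 0, 0, 0],
    ![0, 0, 0, 1, 0, 0, 0, 0, 0, 0, 0, 0],
    ![0, 0, 0, 0, 1, 0, 0, 0, 0, 0, 0, 0],
    ![0, 0, 0, 0, 0, 1, 0, 0, 0, 0, 0, 0],
    ![0, 0, 0, 0, 0, 0, 1, 0, 0, 0, 0, 0],
    ![0, 0, 0, 0, 0, 0, 0, 1, 0, 0, 0, 0],
    ![0, 0, 0, 0, 0, 0, 0, 0, 1, -1, 0, 0],
    ![0, 0, 0, 0, 0, 0, 0, 0, 1, 0, 0, 0],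
    ![0, 1, 0, 1, 0, 1, 0, 0, -1, 0, 0, 0],
    ![0, 1, 0, 1, 0, 1, 0, 0, -1, 0, 0, 1],
    ![0, 0, 0, 1, 0, 0, 0, 0, 0, 0, 1, 0],
    ![0, 0, 0, 0, 0, 1, 0, 1, 0, 0, -1, 0],
    ![0, 0, 1, 0, 0, 0, 0, 1, 0, 1, -1, 0],
    ![0, 0, 0, 0, 1, 0, 0, 0, 0, 0, 1, -1],
    ![0, 0, 0, 0, 0, 0, 0, 1, 1, 0, -1, 0],
    ![0, 1, 0, 1, 0, 1, 0, 0, -1, 0, 1, 0],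
    ![0, 0, 0, 1, 0, 0, 0, 0, 0, 0, 0, 1],
    ![0, 0, 1, 0, 0, 0, 0, 0, 0, 1, 0, 0],
    ![0, 0, 0, 0, 1, 0, 0, 0, 0, 0, 0, -1],
    ![0, 0, 0, 0, 0, 1, 0, 0, 0, -1, 0, 0]]

lemma sum22 {β : Type*} [AddCommMonoid β] (f : Fin 22 → β) :
    ∑ i, f i = f 0 + (f 1 + (f 2 + (f 3 + (f 4 + (f 5 + (f 6 + (f 7 + (f 8 + (f 9 + (f 10 + (f 11 + (f 12 + (f 13 + (f 14 + (f 15 + (f 16 + (f 17 + (f 18 + (f 19 + (f 20 + (f 21))))))))))))))))))))) := by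
  simp only [Fin.sum_univ_succ, Fin.sum_univ_zero, add_zero]
  rfl

lemma vE_0_0 : vZ (0:Fin 22) (0:Fin 12) = 1 := rfl
lemma vE_0_1 : vZ (0:Fin 22) (1:Fin 12) = 0 := rfl
lemma vE_0_2 : vZ (0:Fin 22) (2:Fin 12) = 0 := rfl
lemma vE_0_3 : vZ (0:Fin 22) (3:Fin 12) = 0 := rfl
lemma vE_0_4 : vZ (0:Fin 22) (4:Fin 12) = 0 := rfl
lemma vE_0_5 : vZ (0:Fin 22) (5:Fin 12) = 0 := rfl
lemma vE_0_6 : vZ (0:Fin 22) (6:Fin 12) = 0 := rfl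
lemma vE_0_7 : vZ (0:Fin 22) (7:Fin 12) = 0 := rfl
lemma vE_0_8 : vZ (0:Fin 22) (8:Fin 12) = 0 := rfl
lemma vE_0_9 : vZ (0:Fin 22) (9:Fin 12) = 0 := rfl
lemma vE_0_10 : vZ (0:Fin 22) (10:Fin 12) = 0 := rfl
lemma vE_0_11 : vZ (0:Fin 22) (11:Fin 12) = 0 := rfl
lemma vE_1_0 : vZ (1:Fin 22) (0:Fin 12) = 0 := rfl
lemma vE_1_1 : vZ (1:Fin 22) (1:Fin 12) = 1 := rfl
lemma vE_1_2 : vZ (1:Fin 22) (2:Fin 12) = 0 := rfl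
lemma vE_1_3 : vZ (1:Fin 22) (3:Fin 12) = 0 := rfl
lemma vE_1_4 : vZ (1:Fin 22) (4:Fin 12) = 0 := rfl
lemma vE_1_5 : vZ (1:Fin 22) (5:Fin 12) = 0 := rfl
lemma vE_1_6 : vZ (1:Fin 22) (6:Fin 12) = 0 := rfl
lemma vE_1_7 : vZ (1:Fin 22) (7:Fin 12) = 0 := rfl
lemma vE_1_8 : vZ (1:Fin 22) (8:Fin 12) = 0 := rfl
lemma vE_1_9 : vZ (1:Fin 22) (9:Fin 12) = 0 := rfl
lemma vE_1_10 : vZ (1:Fin 22) (10:Fin 12) = 0 := rfl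
lemma vE_1_11 : vZ (1:Fin 22) (11:Fin 12) = 0 := rfl
lemma vE_2_0 : vZ (2:Fin 22) (0:Fin 12) = 0 := rfl
lemma vE_2_1 : vZ (2:Fin 22) (1:Fin 12) = 0 := rfl
lemma vE_2_2 : vZ (2:Fin 22) (2:Fin 12) = 1 := rfl
lemma vE_2_3 : vZ (2:Fin 22) (3:Fin 12) = 0 := rfl
lemma vE_2_4 : vZ (2:Fin 22) (4:Fin 12) = 0 := rfl
lemma vE_2_5 : vZ (2:Fin 22) (5:Fin 12) = 0 := rfl
lemma vE_2_6 : vZ (2:Fin 22) (6:Fin 12) = 0 := rfl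
lemma vE_2_7 : vZ (2:Fin 22) (7:Fin 12) = 0 := rfl
lemma vE_2_8 : vZ (2:Fin 22) (8:Fin 12) = 0 := rfl
lemma vE_2_9 : vZ (2:Fin 22) (9:Fin 12) = 0 := rfl
lemma vE_2_10 : vZ (2:Fin 22) (10:Fin 12) = 0 := rfl
lemma vE_2_11 : vZ (2:Fin 22) (11:Fin 12) = 0 := rfl
lemma vE_3_0 : vZ (3:Fin 22) (0:Fin 12) = 0 := rfl
lemma vE_3_1 : vZ (3:Fin 22) (1:Fin 12) = 0 := rfl
lemma vE_3_2 : vZ (3:Fin 22) (2:Fin 12) = 0 := rfl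
lemma vE_3_3 : vZ (3:Fin 22) (3:Fin 12) = 1 := rfl
lemma vE_3_4 : vZ (3:Fin 22) (4:Fin 12) = 0 := rfl
lemma vE_3_5 : vZ (3:Fin 22) (5:Fin 12) = 0 := rfl
lemma vE_3_6 : vZ (3:Fin 22) (6:Fin 12) = 0 := rfl
lemma vE_3_7 : vZ (3:Fin 22) (7:Fin 12) = 0 := rfl
lemma vE_3_8 : vZ (3:Fin 22) (8:Fin 12) = 0 := rfl
lemma vE_3_9 : vZ (3:Fin 22) (9:Fin 12) = 0 := rfl
lemma vE_3_10 : vZ (3:Fin 22) (10:Fin 12) = 0 := rfl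
lemma vE_3_11 : vZ (3:Fin 22) (11:Fin 12) = 0 := rfl
lemma vE_4_0 : vZ (4:Fin 22) (0:Fin 12) = 0 := rfl
lemma vE_4_1 : vZ (4:Fin 22) (1:Fin 12) = 0 := rfl
lemma vE_4_2 : vZ (4:Fin 22) (2:Fin 12) = 0 := rfl
lemma vE_4_3 : vZ (4:Fin 22) (3:Fin 12) = 0 := rfl
lemma vE_4_4 : vZ (4:Fin 22) (4:Fin 12) = 1 := rfl
lemma vE_4_5 : vZ (4:Fin 22) (5:Fin 12) = 0 := rfl
lemma vE_4_6 : vZ (4:Fin 22) (6:Fin 12) = 0 := rfl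
lemma vE_4_7 : vZ (4:Fin 22) (7:Fin 12) = 0 := rfl
lemma vE_4_8 : vZ (4:Fin 22) (8:Fin 12) = 0 := rfl
lemma vE_4_9 : vZ (4:Fin 22) (9:Fin 12) = 0 := rfl
lemma vE_4_10 : vZ (4:Fin 22) (10:Fin 12) = 0 := rfl
lemma vE_4_11 : vZ (4:Fin 22) (11:Fin 12) = 0 := rfl
lemma vE_5_0 : vZ (5:Fin 22) (0:Fin 12) = 0 := rfl
lemma vE_5_1 : vZ (5:Fin 22) (1:Fin 12) = 0 := rfl
lemma vE_5_2 : vZ (5:Fin 22) (2:Fin 12) = 0 := rfl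
lemma vE_5_3 : vZ (5:Fin 22) (3:Fin 12) = 0 := rfl
lemma vE_5_4 : vZ (5:Fin 22) (4:Fin 12) = 0 := rfl
lemma vE_5_5 : vZ (5:Fin 22) (5:Fin 12) = 1 := rfl
lemma vE_5_6 : vZ (5:Fin 22) (6:Fin 12) = 0 := rfl
lemma vE_5_7 : vZ (5:Fin 22) (7:Fin 12) = 0 := rfl
lemma vE_5_8 : vZ (5:Fin 22) (8:Fin 12) = 0 := rfl
lemma vE_5_9 : vZ (5:Fin 22) (9:Fin 12) = 0 := rfl
lemma vE_5_10 : vZ (5:Fin 22) (10:Fin 12) = 0 := rfl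
lemma vE_5_11 : vZ (5:Fin 22) (11:Fin 12) = 0 := rfl
lemma vE_6_0 : vZ (6:Fin 22) (0:Fin 12) = 0 := rfl
lemma vE_6_1 : vZ (6:Fin 22) (1:Fin 12) = 0 := rfl
lemma vE_6_2 : vZ (6:Fin 22) (2:Fin 12) = 0 := rfl
lemma vE_6_3 : vZ (6:Fin 22) (3:Fin 12) = 0 := rfl
lemma vE_6_4 : vZ (6:Fin 22) (4:Fin 12) = 0 := rfl
lemma vE_6_5 : vZ (6:Fin 22) (5:Fin 12) = 0 := rfl
lemma vE_6_6 : vZ (6:Fin 22) (6:Fin 12) = 1 := rfl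
lemma vE_6_7 : vZ (6:Fin 22) (7:Fin 12) = 0 := rfl
lemma vE_6_8 : vZ (6:Fin 22) (8:Fin 12) = 0 := rfl
lemma vE_6_9 : vZ (6:Fin 22) (9:Fin 12) = 0 := rfl
lemma vE_6_10 : vZ (6:Fin 22) (10:Fin 12) = 0 := rfl
lemma vE_6_11 : vZ (6:Fin 22) (11:Fin 12) = 0 := rfl
lemma vE_7_0 : vZ (7:Fin 22) (0:Fin 12) = 0 := rfl
lemma vE_7_1 : vZ (7:Fin 22) (1:Fin 12) = 0 := rfl
lemma vE_7_2 : vZ (7:Fin 22) (2:Fin 12) = 0 := rfl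
lemma vE_7_3 : vZ (7:Fin 22) (3:Fin 12) = 0 := rfl
lemma vE_7_4 : vZ (7:Fin 22) (4:Fin 12) = 0 := rfl
lemma vE_7_5 : vZ (7:Fin 22) (5:Fin 12) = 0 := rfl
lemma vE_7_6 : vZ (7:Fin 22) (6:Fin 12) = 0 := rfl
lemma vE_7_7 : vZ (7:Fin 22) (7:Fin 12) = 1 := rfl
lemma vE_7_8 : vZ (7:Fin 22) (8:Fin 12) = 0 := rfl
lemma vE_7_9 : vZ (7:Fin 22) (9:Fin 12) = 0 := rfl
lemma vE_7_10 : vZ (7:Fin 22) (10:Fin 12) = 0 := rfl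
lemma vE_7_11 : vZ (7:Fin 22) (11:Fin 12) = 0 := rfl
lemma vE_8_0 : vZ (8:Fin 22) (0:Fin 12) = 0 := rfl
lemma vE_8_1 : vZ (8:Fin 22) (1:Fin 12) = 0 := rfl
lemma vE_8_2 : vZ (8:Fin 22) (2:Fin 12) = 0 := rfl
lemma vE_8_3 : vZ (8:Fin 22) (3:Fin 12) = 0 := rfl
lemma vE_8_4 : vZ (8:Fin 22) (4:Fin 12) = 0 := rfl
lemma vE_8_5 : vZ (8:Fin 22) (5:Fin 12) = 0 := rfl
lemma vE_8_6 : vZ (8:Fin 22) (6:Fin 12) = 0 := rfl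
lemma vE_8_7 : vZ (8:Fin 22) (7:Fin 12) = 0 := rfl
lemma vE_8_8 : vZ (8:Fin 22) (8:Fin 12) = 1 := rfl
lemma vE_8_9 : vZ (8:Fin 22) (9:Fin 12) = -1 := rfl
lemma vE_8_10 : vZ (8:Fin 22) (10:Fin 12) = 0 := rfl
lemma vE_8_11 : vZ (8:Fin 22) (11:Fin 12) = 0 := rfl
lemma vE_9_0 : vZ (9:Fin 22) (0:Fin 12) = 0 := rfl
lemma vE_9_1 : vZ (9:Fin 22) (1:Fin 12) = 0 := rfl
lemma vE_9_2 : vZ (9:Fin 22) (2:Fin 12) = 0 := rfl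
lemma vE_9_3 : vZ (9:Fin 22) (3:Fin 12) = 0 := rfl
lemma vE_9_4 : vZ (9:Fin 22) (4:Fin 12) = 0 := rfl
lemma vE_9_5 : vZ (9:Fin 22) (5:Fin 12) = 0 := rfl
lemma vE_9_6 : vZ (9:Fin 22) (6:Fin 12) = 0 := rfl
lemma vE_9_7 : vZ (9:Fin 22) (7:Fin 12) = 0 := rfl
lemma vE_9_8 : vZ (9:Fin 22) (8:Fin 12) = 1 := rfl
lemma vE_9_9 : vZ (9:Fin 22) (9:Fin 12) = 0 := rfl
lemma vE_9_10 : vZ (9:Fin 22) (10:Fin 12) = 0 := rfl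
lemma vE_9_11 : vZ (9:Fin 22) (11:Fin 12) = 0 := rfl
lemma vE_10_0 : vZ (10:Fin 22) (0:Fin 12) = 0 := rfl
lemma vE_10_1 : vZ (10:Fin 22) (1:Fin 12) = 1 := rfl
lemma vE_10_2 : vZ (10:Fin 22) (2:Fin 12) = 0 := rfl
lemma vE_10_3 : vZ (10:Fin 22) (3:Fin 12) = 1 := rfl
lemma vE_10_4 : vZ (10:Fin 22) (4:Fin 12) = 0 := rfl
lemma vE_10_5 : vZ (10:Fin 22) (5:Fin 12) = 1 := rfl
lemma vE_10_6 : vZ (10:Fin 22) (6:Fin 12) = 0 := rfl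
lemma vE_10_7 : vZ (10:Fin 22) (7:Fin 12) = 0 := rfl
lemma vE_10_8 : vZ (10:Fin 22) (8:Fin 12) = -1 := rfl
lemma vE_10_9 : vZ (10:Fin 22) (9:Fin 12) = 0 := rfl
lemma vE_10_10 : vZ (10:Fin 22) (10:Fin 12) = 0 := rfl
lemma vE_10_11 : vZ (10:Fin 22) (11:Fin 12) = 0 := rfl
lemma vE_11_0 : vZ (11:Fin 22) (0:Fin 12) = 0 := rfl
lemma vE_11_1 : vZ (11:Fin 22) (1:Fin 12) = 1 := rfl
lemma vE_11_2 : vZ (11:Fin 22) (2:Fin 12) = 0 := rfl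
lemma vE_11_3 : vZ (11:Fin 22) (3:Fin 12) = 1 := rfl
lemma vE_11_4 : vZ (11:Fin 22) (4:Fin 12) = 0 := rfl
lemma vE_11_5 : vZ (11:Fin 22) (5:Fin 12) = 1 := rfl
lemma vE_11_6 : vZ (11:Fin 22) (6:Fin 12) = 0 := rfl
lemma vE_11_7 : vZ (11:Fin 22) (7:Fin 12) = 0 := rfl
lemma vE_11_8 : vZ (11:Fin 22) (8:Fin 12) = -1 := rfl
lemma vE_11_9 : vZ (11:Fin 22) (9:Fin 12) = 0 := rfl
lemma vE_11_10 : vZ (11:Fin 22) (10:Fin 12) = 0 := rfl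
lemma vE_11_11 : vZ (11:Fin 22) (11:Fin 12) = 1 := rfl
lemma vE_12_0 : vZ (12:Fin 22) (0:Fin 12) = 0 := rfl
lemma vE_12_1 : vZ (12:Fin 22) (1:Fin 12) = 0 := rfl
lemma vE_12_2 : vZ (12:Fin 22) (2:Fin 12) = 0 := rfl
lemma vE_12_3 : vZ (12:Fin 22) (3:Fin 12) = 1 := rfl
lemma vE_12_4 : vZ (12:Fin 22) (4:Fin 12) = 0 := rfl
lemma vE_12_5 : vZ (12:Fin 22) (5:Fin 12) = 0 := rfl
lemma vE_12_6 : vZ (12:Fin 22) (6:Fin 12) = 0 := rfl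
lemma vE_12_7 : vZ (12:Fin 22) (7:Fin 12) = 0 := rfl
lemma vE_12_8 : vZ (12:Fin 22) (8:Fin 12) = 0 := rfl
lemma vE_12_9 : vZ (12:Fin 22) (9:Fin 12) = 0 := rfl
lemma vE_12_10 : vZ (12:Fin 22) (10:Fin 12) = 1 := rfl
lemma vE_12_11 : vZ (12:Fin 22) (11:Fin 12) = 0 := rfl
lemma vE_13_0 : vZ (13:Fin 22) (0:Fin 12) = 0 := rfl
lemma vE_13_1 : vZ (13:Fin 22) (1:Fin 12) = 0 := rfl
lemma vE_13_2 : vZ (13:Fin 22) (2:Fin 12) = 0 := rfl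
lemma vE_13_3 : vZ (13:Fin 22) (3:Fin 12) = 0 := rfl
lemma vE_13_4 : vZ (13:Fin 22) (4:Fin 12) = 0 := rfl
lemma vE_13_5 : vZ (13:Fin 22) (5:Fin 12) = 1 := rfl
lemma vE_13_6 : vZ (13:Fin 22) (6:Fin 12) = 0 := rfl
lemma vE_13_7 : vZ (13:Fin 22) (7:Fin 12) = 1 := rfl
lemma vE_13_8 : vZ (13:Fin 22) (8:Fin 12) = 0 := rfl
lemma vE_13_9 : vZ (13:Fin 22) (9:Fin 12) = 0 := rfl
lemma vE_13_10 : vZ (13:Fin 22) (10:Fin 12) = -1 := rfl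
lemma vE_13_11 : vZ (13:Fin 22) (11:Fin 12) = 0 := rfl
lemma vE_14_0 : vZ (14:Fin 22) (0:Fin 12) = 0 := rfl
lemma vE_14_1 : vZ (14:Fin 22) (1:Fin 12) = 0 := rfl
lemma vE_14_2 : vZ (14:Fin 22) (2:Fin 12) = 1 := rfl
lemma vE_14_3 : vZ (14:Fin 22) (3:Fin 12) = 0 := rfl
lemma vE_14_4 : vZ (14:Fin 22) (4:Fin 12) = 0 := rfl
lemma vE_14_5 : vZ (14:Fin 22) (5:Fin 12) = 0 := rfl
lemma vE_14_6 : vZ (14:Fin 22) (6:Fin 12) = 0 := rfl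
lemma vE_14_7 : vZ (14:Fin 22) (7:Fin 12) = 1 := rfl
lemma vE_14_8 : vZ (14:Fin 22) (8:Fin 12) = 0 := rfl
lemma vE_14_9 : vZ (14:Fin 22) (9:Fin 12) = 1 := rfl
lemma vE_14_10 : vZ (14:Fin 22) (10:Fin 12) = -1 := rfl
lemma vE_14_11 : vZ (14:Fin 22) (11:Fin 12) = 0 := rfl
lemma vE_15_0 : vZ (15:Fin 22) (0:Fin 12) = 0 := rfl
lemma vE_15_1 : vZ (15:Fin 22) (1:Fin 12) = 0 := rfl
lemma vE_15_2 : vZ (15:Fin 22) (2:Fin 12) = 0 := rfl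
lemma vE_15_3 : vZ (15:Fin 22) (3:Fin 12) = 0 := rfl
lemma vE_15_4 : vZ (15:Fin 22) (4:Fin 12) = 1 := rfl
lemma vE_15_5 : vZ (15:Fin 22) (5:Fin 12) = 0 := rfl
lemma vE_15_6 : vZ (15:Fin 22) (6:Fin 12) = 0 := rfl
lemma vE_15_7 : vZ (15:Fin 22) (7:Fin 12) = 0 := rfl
lemma vE_15_8 : vZ (15:Fin 22) (8:Fin 12) = 0 := rfl
lemma vE_15_9 : vZ (15:Fin 22) (9:Fin 12) = 0 := rfl
lemma vE_15_10 : vZ (15:Fin 22) (10:Fin 12) = 1 := rfl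
lemma vE_15_11 : vZ (15:Fin 22) (11:Fin 12) = -1 := rfl
lemma vE_16_0 : vZ (16:Fin 22) (0:Fin 12) = 0 := rfl
lemma vE_16_1 : vZ (16:Fin 22) (1:Fin 12) = 0 := rfl
lemma vE_16_2 : vZ (16:Fin 22) (2:Fin 12) = 0 := rfl
lemma vE_16_3 : vZ (16:Fin 22) (3:Fin 12) = 0 := rfl
lemma vE_16_4 : vZ (16:Fin 22) (4:Fin 12) = 0 := rfl
lemma vE_16_5 : vZ (16:Fin 22) (5:Fin 12) = 0 := rfl
lemma vE_16_6 : vZ (16:Fin 22) (6:Fin 12) = 0 := rfl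
lemma vE_16_7 : vZ (16:Fin 22) (7:Fin 12) = 1 := rfl
lemma vE_16_8 : vZ (16:Fin 22) (8:Fin 12) = 1 := rfl
lemma vE_16_9 : vZ (16:Fin 22) (9:Fin 12) = 0 := rfl
lemma vE_16_10 : vZ (16:Fin 22) (10:Fin 12) = -1 := rfl
lemma vE_16_11 : vZ (16:Fin 22) (11:Fin 12) = 0 := rfl
lemma vE_17_0 : vZ (17:Fin 22) (0:Fin 12) = 0 := rfl
lemma vE_17_1 : vZ (17:Fin 22) (1:Fin 12) = 1 := rfl
lemma vE_17_2 : vZ (17:Fin 22) (2:Fin 12) = 0 := rfl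
lemma vE_17_3 : vZ (17:Fin 22) (3:Fin 12) = 1 := rfl
lemma vE_17_4 : vZ (17:Fin 22) (4:Fin 12) = 0 := rfl
lemma vE_17_5 : vZ (17:Fin 22) (5:Fin 12) = 1 := rfl
lemma vE_17_6 : vZ (17:Fin 22) (6:Fin 12) = 0 := rfl
lemma vE_17_7 : vZ (17:Fin 22) (7:Fin 12) = 0 := rfl
lemma vE_17_8 : vZ (17:Fin 22) (8:Fin 12) = -1 := rfl
lemma vE_17_9 : vZ (17:Fin 22) (9:Fin 12) = 0 := rfl
lemma vE_17_10 : vZ (17:Fin 22) (10:Fin 12) = 1 := rfl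
lemma vE_17_11 : vZ (17:Fin 22) (11:Fin 12) = 0 := rfl
lemma vE_18_0 : vZ (18:Fin 22) (0:Fin 12) = 0 := rfl
lemma vE_18_1 : vZ (18:Fin 22) (1:Fin 12) = 0 := rfl
lemma vE_18_2 : vZ (18:Fin 22) (2:Fin 12) = 0 := rfl
lemma vE_18_3 : vZ (18:Fin 22) (3:Fin 12) = 1 := rfl
lemma vE_18_4 : vZ (18:Fin 22) (4:Fin 12) = 0 := rfl
lemma vE_18_5 : vZ (18:Fin 22) (5:Fin 12) = 0 := rfl
lemma vE_18_6 : vZ (18:Fin 22) (6:Fin 12) = 0 := rfl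
lemma vE_18_7 : vZ (18:Fin 22) (7:Fin 12) = 0 := rfl
lemma vE_18_8 : vZ (18:Fin 22) (8:Fin 12) = 0 := rfl
lemma vE_18_9 : vZ (18:Fin 22) (9:Fin 12) = 0 := rfl
lemma vE_18_10 : vZ (18:Fin 22) (10:Fin 12) = 0 := rfl
lemma vE_18_11 : vZ (18:Fin 22) (11:Fin 12) = 1 := rfl
lemma vE_19_0 : vZ (19:Fin 22) (0:Fin 12) = 0 := rfl
lemma vE_19_1 : vZ (19:Fin 22) (1:Fin 12) = 0 := rfl
lemma vE_19_2 : vZ (19:Fin 22) (2:Fin 12) = 1 := rfl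
lemma vE_19_3 : vZ (19:Fin 22) (3:Fin 12) = 0 := rfl
lemma vE_19_4 : vZ (19:Fin 22) (4:Fin 12) = 0 := rfl
lemma vE_19_5 : vZ (19:Fin 22) (5:Fin 12) = 0 := rfl
lemma vE_19_6 : vZ (19:Fin 22) (6:Fin 12) = 0 := rfl
lemma vE_19_7 : vZ (19:Fin 22) (7:Fin 12) = 0 := rfl
lemma vE_19_8 : vZ (19:Fin 22) (8:Fin 12) = 0 := rfl
lemma vE_19_9 : vZ (19:Fin 22) (9:Fin 12) = 1 := rfl
lemma vE_19_10 : vZ (19:Fin 22) (10:Fin 12) = 0 := rfl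
lemma vE_19_11 : vZ (19:Fin 22) (11:Fin 12) = 0 := rfl
lemma vE_20_0 : vZ (20:Fin 22) (0:Fin 12) = 0 := rfl
lemma vE_20_1 : vZ (20:Fin 22) (1:Fin 12) = 0 := rfl
lemma vE_20_2 : vZ (20:Fin 22) (2:Fin 12) = 0 := rfl
lemma vE_20_3 : vZ (20:Fin 22) (3:Fin 12) = 0 := rfl
lemma vE_20_4 : vZ (20:Fin 22) (4:Fin 12) = 1 := rfl
lemma vE_20_5 : vZ (20:Fin 22) (5:Fin 12) = 0 := rfl
lemma vE_20_6 : vZ (20:Fin 22) (6:Fin 12) = 0 := rfl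
lemma vE_20_7 : vZ (20:Fin 22) (7:Fin 12) = 0 := rfl
lemma vE_20_8 : vZ (20:Fin 22) (8:Fin 12) = 0 := rfl
lemma vE_20_9 : vZ (20:Fin 22) (9:Fin 12) = 0 := rfl
lemma vE_20_10 : vZ (20:Fin 22) (10:Fin 12) = 0 := rfl
lemma vE_20_11 : vZ (20:Fin 22) (11:Fin 12) = -1 := rfl
lemma vE_21_0 : vZ (21:Fin 22) (0:Fin 12) = 0 := rfl
lemma vE_21_1 : vZ (21:Fin 22) (1:Fin 12) = 0 := rfl
lemma vE_21_2 : vZ (21:Fin 22) (2:Fin 12) = 0 := rfl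
lemma vE_21_3 : vZ (21:Fin 22) (3:Fin 12) = 0 := rfl
lemma vE_21_4 : vZ (21:Fin 22) (4:Fin 12) = 0 := rfl
lemma vE_21_5 : vZ (21:Fin 22) (5:Fin 12) = 1 := rfl
lemma vE_21_6 : vZ (21:Fin 22) (6:Fin 12) = 0 := rfl
lemma vE_21_7 : vZ (21:Fin 22) (7:Fin 12) = 0 := rfl
lemma vE_21_8 : vZ (21:Fin 22) (8:Fin 12) = 0 := rfl
lemma vE_21_9 : vZ (21:Fin 22) (9:Fin 12) = -1 := rfl
lemma vE_21_10 : vZ (21:Fin 22) (10:Fin 12) = 0 := rfl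
lemma vE_21_11 : vZ (21:Fin 22) (11:Fin 12) = 0 := rfl
lemma vM_0_0 : vZ (⟨0, by norm_num⟩ : Fin 22) (0:Fin 12) = 1 := rfl
lemma vM_0_1 : vZ (⟨0, by norm_num⟩ : Fin 22) (1:Fin 12) = 0 := rfl
lemma vM_0_2 : vZ (⟨0, by norm_num⟩ : Fin 22) (2:Fin 12) = 0 := rfl
lemma vM_0_3 : vZ (⟨0, by norm_num⟩ : Fin 22) (3:Fin 12) = 0 := rfl
lemma vM_0_4 : vZ (⟨0, by norm_num⟩ : Fin 22) (4:Fin 12) = 0 := rfl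
lemma vM_0_5 : vZ (⟨0, by norm_num⟩ : Fin 22) (5:Fin 12) = 0 := rfl
lemma vM_0_6 : vZ (⟨0, by norm_num⟩ : Fin 22) (6:Fin 12) = 0 := rfl
lemma vM_0_7 : vZ (⟨0, by norm_num⟩ : Fin 22) (7:Fin 12) = 0 := rfl
lemma vM_0_8 : vZ (⟨0, by norm_num⟩ : Fin 22) (8:Fin 12) = 0 := rfl
lemma vM_0_9 : vZ (⟨0, by norm_num⟩ : Fin 22) (9:Fin 12) = 0 := rfl
lemma vM_0_10 : vZ (⟨0, by norm_num⟩ : Fin 22) (10:Fin 12) = 0 := rfl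
lemma vM_0_11 : vZ (⟨0, by norm_num⟩ : Fin 22) (11:Fin 12) = 0 := rfl
lemma vM_1_0 : vZ (⟨1, by norm_num⟩ : Fin 22) (0:Fin 12) = 0 := rfl
lemma vM_1_1 : vZ (⟨1, by norm_num⟩ : Fin 22) (1:Fin 12) = 1 := rfl
lemma vM_1_2 : vZ (⟨1, by norm_num⟩ : Fin 22) (2:Fin 12) = 0 := rfl
lemma vM_1_3 : vZ (⟨1, by norm_num⟩ : Fin 22) (3:Fin 12) = 0 := rfl
lemma vM_1_4 : vZ (⟨1, by norm_num⟩ : Fin 22) (4:Fin 12) = 0 := rfl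
lemma vM_1_5 : vZ (⟨1, by norm_num⟩ : Fin 22) (5:Fin 12) = 0 := rfl
lemma vM_1_6 : vZ (⟨1, by norm_num⟩ : Fin 22) (6:Fin 12) = 0 := rfl
lemma vM_1_7 : vZ (⟨1, by norm_num⟩ : Fin 22) (7:Fin 12) = 0 := rfl
lemma vM_1_8 : vZ (⟨1, by norm_num⟩ : Fin 22) (8:Fin 12) = 0 := rfl
lemma vM_1_9 : vZ (⟨1, by norm_num⟩ : Fin 22) (9:Fin 12) = 0 := rfl
lemma vM_1_10 : vZ (⟨1, by norm_num⟩ : Fin 22) (10:Fin 12) = 0 := rfl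
lemma vM_1_11 : vZ (⟨1, by norm_num⟩ : Fin 22) (11:Fin 12) = 0 := rfl
lemma vM_2_0 : vZ (⟨2, by norm_num⟩ : Fin 22) (0:Fin 12) = 0 := rfl
lemma vM_2_1 : vZ (⟨2, by norm_num⟩ : Fin 22) (1:Fin 12) = 0 := rfl
lemma vM_2_2 : vZ (⟨2, by norm_num⟩ : Fin 22) (2:Fin 12) = 1 := rfl
lemma vM_2_3 : vZ (⟨2, by norm_num⟩ : Fin 22) (3:Fin 12) = 0 := rfl
lemma vM_2_4 : vZ (⟨2, by norm_num⟩ : Fin 22) (4:Fin 12) = 0 := rfl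
lemma vM_2_5 : vZ (⟨2, by norm_num⟩ : Fin 22) (5:Fin 12) = 0 := rfl
lemma vM_2_6 : vZ (⟨2, by norm_num⟩ : Fin 22) (6:Fin 12) = 0 := rfl
lemma vM_2_7 : vZ (⟨2, by norm_num⟩ : Fin 22) (7:Fin 12) = 0 := rfl
lemma vM_2_8 : vZ (⟨2, by norm_num⟩ : Fin 22) (8:Fin 12) = 0 := rfl
lemma vM_2_9 : vZ (⟨2, by norm_num⟩ : Fin 22) (9:Fin 12) = 0 := rfl
lemma vM_2_10 : vZ (⟨2, by norm_num⟩ : Fin 22) (10:Fin 12) = 0 := rfl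
lemma vM_2_11 : vZ (⟨2, by norm_num⟩ : Fin 22) (11:Fin 12) = 0 := rfl
lemma vM_3_0 : vZ (⟨3, by norm_num⟩ : Fin 22) (0:Fin 12) = 0 := rfl
lemma vM_3_1 : vZ (⟨3, by norm_num⟩ : Fin 22) (1:Fin 12) = 0 := rfl
lemma vM_3_2 : vZ (⟨3, by norm_num⟩ : Fin 22) (2:Fin 12) = 0 := rfl
lemma vM_3_3 : vZ (⟨3, by norm_num⟩ : Fin 22) (3:Fin 12) = 1 := rfl
lemma vM_3_4 : vZ (⟨3, by norm_num⟩ : Fin 22) (4:Fin 12) = 0 := rfl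
lemma vM_3_5 : vZ (⟨3, by norm_num⟩ : Fin 22) (5:Fin 12) = 0 := rfl
lemma vM_3_6 : vZ (⟨3, by norm_num⟩ : Fin 22) (6:Fin 12) = 0 := rfl
lemma vM_3_7 : vZ (⟨3, by norm_num⟩ : Fin 22) (7:Fin 12) = 0 := rfl
lemma vM_3_8 : vZ (⟨3, by norm_num⟩ : Fin 22) (8:Fin 12) = 0 := rfl
lemma vM_3_9 : vZ (⟨3, by norm_num⟩ : Fin 22) (9:Fin 12) = 0 := rfl
lemma vM_3_10 : vZ (⟨3, by norm_num⟩ : Fin 22) (10:Fin 12) = 0 := rfl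
lemma vM_3_11 : vZ (⟨3, by norm_num⟩ : Fin 22) (11:Fin 12) = 0 := rfl
lemma vM_4_0 : vZ (⟨4, by norm_num⟩ : Fin 22) (0:Fin 12) = 0 := rfl
lemma vM_4_1 : vZ (⟨4, by norm_num⟩ : Fin 22) (1:Fin 12) = 0 := rfl
lemma vM_4_2 : vZ (⟨4, by norm_num⟩ : Fin 22) (2:Fin 12) = 0 := rfl
lemma vM_4_3 : vZ (⟨4, by norm_num⟩ : Fin 22) (3:Fin 12) = 0 := rfl
lemma vM_4_4 : vZ (⟨4, by norm_num⟩ : Fin 22) (4:Fin 12) = 1 := rfl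
lemma vM_4_5 : vZ (⟨4, by norm_num⟩ : Fin 22) (5:Fin 12) = 0 := rfl
lemma vM_4_6 : vZ (⟨4, by norm_num⟩ : Fin 22) (6:Fin 12) = 0 := rfl
lemma vM_4_7 : vZ (⟨4, by norm_num⟩ : Fin 22) (7:Fin 12) = 0 := rfl
lemma vM_4_8 : vZ (⟨4, by norm_num⟩ : Fin 22) (8:Fin 12) = 0 := rfl
lemma vM_4_9 : vZ (⟨4, by norm_num⟩ : Fin 22) (9:Fin 12) = 0 := rfl
lemma vM_4_10 : vZ (⟨4, by norm_num⟩ : Fin 22) (10:Fin 12) = 0 := rfl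
lemma vM_4_11 : vZ (⟨4, by norm_num⟩ : Fin 22) (11:Fin 12) = 0 := rfl
lemma vM_5_0 : vZ (⟨5, by norm_num⟩ : Fin 22) (0:Fin 12) = 0 := rfl
lemma vM_5_1 : vZ (⟨5, by norm_num⟩ : Fin 22) (1:Fin 12) = 0 := rfl
lemma vM_5_2 : vZ (⟨5, by norm_num⟩ : Fin 22) (2:Fin 12) = 0 := rfl
lemma vM_5_3 : vZ (⟨5, by norm_num⟩ : Fin 22) (3:Fin 12) = 0 := rfl
lemma vM_5_4 : vZ (⟨5, by norm_num⟩ : Fin 22) (4:Fin 12) = 0 := rfl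
lemma vM_5_5 : vZ (⟨5, by norm_num⟩ : Fin 22) (5:Fin 12) = 1 := rfl
lemma vM_5_6 : vZ (⟨5, by norm_num⟩ : Fin 22) (6:Fin 12) = 0 := rfl
lemma vM_5_7 : vZ (⟨5, by norm_num⟩ : Fin 22) (7:Fin 12) = 0 := rfl
lemma vM_5_8 : vZ (⟨5, by norm_num⟩ : Fin 22) (8:Fin 12) = 0 := rfl
lemma vM_5_9 : vZ (⟨5, by norm_num⟩ : Fin 22) (9:Fin 12) = 0 := rfl
lemma vM_5_10 : vZ (⟨5, by norm_num⟩ : Fin 22) (10:Fin 12) = 0 := rfl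
lemma vM_5_11 : vZ (⟨5, by norm_num⟩ : Fin 22) (11:Fin 12) = 0 := rfl
lemma vM_6_0 : vZ (⟨6, by norm_num⟩ : Fin 22) (0:Fin 12) = 0 := rfl
lemma vM_6_1 : vZ (⟨6, by norm_num⟩ : Fin 22) (1:Fin 12) = 0 := rfl
lemma vM_6_2 : vZ (⟨6, by norm_num⟩ : Fin 22) (2:Fin 12) = 0 := rfl
lemma vM_6_3 : vZ (⟨6, by norm_num⟩ : Fin 22) (3:Fin 12) = 0 := rfl
lemma vM_6_4 : vZ (⟨6, by norm_num⟩ : Fin 22) (4:Fin 12) = 0 := rfl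
lemma vM_6_5 : vZ (⟨6, by norm_num⟩ : Fin 22) (5:Fin 12) = 0 := rfl
lemma vM_6_6 : vZ (⟨6, by norm_num⟩ : Fin 22) (6:Fin 12) = 1 := rfl
lemma vM_6_7 : vZ (⟨6, by norm_num⟩ : Fin 22) (7:Fin 12) = 0 := rfl
lemma vM_6_8 : vZ (⟨6, by norm_num⟩ : Fin 22) (8:Fin 12) = 0 := rfl
lemma vM_6_9 : vZ (⟨6, by norm_num⟩ : Fin 22) (9:Fin 12) = 0 := rfl
lemma vM_6_10 : vZ (⟨6, by norm_num⟩ : Fin 22) (10:Fin 12) = 0 := rfl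
lemma vM_6_11 : vZ (⟨6, by norm_num⟩ : Fin 22) (11:Fin 12) = 0 := rfl
lemma vM_7_0 : vZ (⟨7, by norm_num⟩ : Fin 22) (0:Fin 12) = 0 := rfl
lemma vM_7_1 : vZ (⟨7, by norm_num⟩ : Fin 22) (1:Fin 12) = 0 := rfl
lemma vM_7_2 : vZ (⟨7, by norm_num⟩ : Fin 22) (2:Fin 12) = 0 := rfl
lemma vM_7_3 : vZ (⟨7, by norm_num⟩ : Fin 22) (3:Fin 12) = 0 := rfl
lemma vM_7_4 : vZ (⟨7, by norm_num⟩ : Fin 22) (4:Fin 12) = 0 := rfl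
lemma vM_7_5 : vZ (⟨7, by norm_num⟩ : Fin 22) (5:Fin 12) = 0 := rfl
lemma vM_7_6 : vZ (⟨7, by norm_num⟩ : Fin 22) (6:Fin 12) = 0 := rfl
lemma vM_7_7 : vZ (⟨7, by norm_num⟩ : Fin 22) (7:Fin 12) = 1 := rfl
lemma vM_7_8 : vZ (⟨7, by norm_num⟩ : Fin 22) (8:Fin 12) = 0 := rfl
lemma vM_7_9 : vZ (⟨7, by norm_num⟩ : Fin 22) (9:Fin 12) = 0 := rfl
lemma vM_7_10 : vZ (⟨7, by norm_num⟩ : Fin 22) (10:Fin 12) = 0 := rfl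
lemma vM_7_11 : vZ (⟨7, by norm_num⟩ : Fin 22) (11:Fin 12) = 0 := rfl
lemma vM_8_0 : vZ (⟨8, by norm_num⟩ : Fin 22) (0:Fin 12) = 0 := rfl
lemma vM_8_1 : vZ (⟨8, by norm_num⟩ : Fin 22) (1:Fin 12) = 0 := rfl
lemma vM_8_2 : vZ (⟨8, by norm_num⟩ : Fin 22) (2:Fin 12) = 0 := rfl
lemma vM_8_3 : vZ (⟨8, by norm_num⟩ : Fin 22) (3:Fin 12) = 0 := rfl
lemma vM_8_4 : vZ (⟨8, by norm_num⟩ : Fin 22) (4:Fin 12) = 0 := rfl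
lemma vM_8_5 : vZ (⟨8, by norm_num⟩ : Fin 22) (5:Fin 12) = 0 := rfl
lemma vM_8_6 : vZ (⟨8, by norm_num⟩ : Fin 22) (6:Fin 12) = 0 := rfl
lemma vM_8_7 : vZ (⟨8, by norm_num⟩ : Fin 22) (7:Fin 12) = 0 := rfl
lemma vM_8_8 : vZ (⟨8, by norm_num⟩ : Fin 22) (8:Fin 12) = 1 := rfl
lemma vM_8_9 : vZ (⟨8, by norm_num⟩ : Fin 22) (9:Fin 12) = -1 := rfl
lemma vM_8_10 : vZ (⟨8, by norm_num⟩ : Fin 22) (10:Fin 12) = 0 := rfl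
lemma vM_8_11 : vZ (⟨8, by norm_num⟩ : Fin 22) (11:Fin 12) = 0 := rfl
lemma vM_9_0 : vZ (⟨9, by norm_num⟩ : Fin 22) (0:Fin 12) = 0 := rfl
lemma vM_9_1 : vZ (⟨9, by norm_num⟩ : Fin 22) (1:Fin 12) = 0 := rfl
lemma vM_9_2 : vZ (⟨9, by norm_num⟩ : Fin 22) (2:Fin 12) = 0 := rfl
lemma vM_9_3 : vZ (⟨9, by norm_num⟩ : Fin 22) (3:Fin 12) = 0 := rfl
lemma vM_9_4 : vZ (⟨9, by norm_num⟩ : Fin 22) (4:Fin 12) = 0 := rfl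
lemma vM_9_5 : vZ (⟨9, by norm_num⟩ : Fin 22) (5:Fin 12) = 0 := rfl
lemma vM_9_6 : vZ (⟨9, by norm_num⟩ : Fin 22) (6:Fin 12) = 0 := rfl
lemma vM_9_7 : vZ (⟨9, by norm_num⟩ : Fin 22) (7:Fin 12) = 0 := rfl
lemma vM_9_8 : vZ (⟨9, by norm_num⟩ : Fin 22) (8:Fin 12) = 1 := rfl
lemma vM_9_9 : vZ (⟨9, by norm_num⟩ : Fin 22) (9:Fin 12) = 0 := rfl
lemma vM_9_10 : vZ (⟨9, by norm_num⟩ : Fin 22) (10:Fin 12) = 0 := rfl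
lemma vM_9_11 : vZ (⟨9, by norm_num⟩ : Fin 22) (11:Fin 12) = 0 := rfl
lemma vM_10_0 : vZ (⟨10, by norm_num⟩ : Fin 22) (0:Fin 12) = 0 := rfl
lemma vM_10_1 : vZ (⟨10, by norm_num⟩ : Fin 22) (1:Fin 12) = 1 := rfl
lemma vM_10_2 : vZ (⟨10, by norm_num⟩ : Fin 22) (2:Fin 12) = 0 := rfl
lemma vM_10_3 : vZ (⟨10, by norm_num⟩ : Fin 22) (3:Fin 12) = 1 := rfl
lemma vM_10_4 : vZ (⟨10, by norm_num⟩ : Fin 22) (4:Fin 12) = 0 := rfl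
lemma vM_10_5 : vZ (⟨10, by norm_num⟩ : Fin 22) (5:Fin 12) = 1 := rfl
lemma vM_10_6 : vZ (⟨10, by norm_num⟩ : Fin 22) (6:Fin 12) = 0 := rfl
lemma vM_10_7 : vZ (⟨10, by norm_num⟩ : Fin 22) (7:Fin 12) = 0 := rfl
lemma vM_10_8 : vZ (⟨10, by norm_num⟩ : Fin 22) (8:Fin 12) = -1 := rfl
lemma vM_10_9 : vZ (⟨10, by norm_num⟩ : Fin 22) (9:Fin 12) = 0 := rfl
lemma vM_10_10 : vZ (⟨10, by norm_num⟩ : Fin 22) (10:Fin 12) = 0 := rfl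
lemma vM_10_11 : vZ (⟨10, by norm_num⟩ : Fin 22) (11:Fin 12) = 0 := rfl
lemma vM_11_0 : vZ (⟨11, by norm_num⟩ : Fin 22) (0:Fin 12) = 0 := rfl
lemma vM_11_1 : vZ (⟨11, by norm_num⟩ : Fin 22) (1:Fin 12) = 1 := rfl
lemma vM_11_2 : vZ (⟨11, by norm_num⟩ : Fin 22) (2:Fin 12) = 0 := rfl
lemma vM_11_3 : vZ (⟨11, by norm_num⟩ : Fin 22) (3:Fin 12) = 1 := rfl
lemma vM_11_4 : vZ (⟨11, by norm_num⟩ : Fin 22) (4:Fin 12) = 0 := rfl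
lemma vM_11_5 : vZ (⟨11, by norm_num⟩ : Fin 22) (5:Fin 12) = 1 := rfl
lemma vM_11_6 : vZ (⟨11, by norm_num⟩ : Fin 22) (6:Fin 12) = 0 := rfl
lemma vM_11_7 : vZ (⟨11, by norm_num⟩ : Fin 22) (7:Fin 12) = 0 := rfl
lemma vM_11_8 : vZ (⟨11, by norm_num⟩ : Fin 22) (8:Fin 12) = -1 := rfl
lemma vM_11_9 : vZ (⟨11, by norm_num⟩ : Fin 22) (9:Fin 12) = 0 := rfl
lemma vM_11_10 : vZ (⟨11, by norm_num⟩ : Fin 22) (10:Fin 12) = 0 := rfl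
lemma vM_11_11 : vZ (⟨11, by norm_num⟩ : Fin 22) (11:Fin 12) = 1 := rfl
lemma vM_12_0 : vZ (⟨12, by norm_num⟩ : Fin 22) (0:Fin 12) = 0 := rfl
lemma vM_12_1 : vZ (⟨12, by norm_num⟩ : Fin 22) (1:Fin 12) = 0 := rfl
lemma vM_12_2 : vZ (⟨12, by norm_num⟩ : Fin 22) (2:Fin 12) = 0 := rfl
lemma vM_12_3 : vZ (⟨12, by norm_num⟩ : Fin 22) (3:Fin 12) = 1 := rfl
lemma vM_12_4 : vZ (⟨12, by norm_num⟩ : Fin 22) (4:Fin 12) = 0 := rfl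
lemma vM_12_5 : vZ (⟨12, by norm_num⟩ : Fin 22) (5:Fin 12) = 0 := rfl
lemma vM_12_6 : vZ (⟨12, by norm_num⟩ : Fin 22) (6:Fin 12) = 0 := rfl
lemma vM_12_7 : vZ (⟨12, by norm_num⟩ : Fin 22) (7:Fin 12) = 0 := rfl
lemma vM_12_8 : vZ (⟨12, by norm_num⟩ : Fin 22) (8:Fin 12) = 0 := rfl
lemma vM_12_9 : vZ (⟨12, by norm_num⟩ : Fin 22) (9:Fin 12) = 0 := rfl
lemma vM_12_10 : vZ (⟨12, by norm_num⟩ : Fin 22) (10:Fin 12) = 1 := rfl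
lemma vM_12_11 : vZ (⟨12, by norm_num⟩ : Fin 22) (11:Fin 12) = 0 := rfl
lemma vM_13_0 : vZ (⟨13, by norm_num⟩ : Fin 22) (0:Fin 12) = 0 := rfl
lemma vM_13_1 : vZ (⟨13, by norm_num⟩ : Fin 22) (1:Fin 12) = 0 := rfl
lemma vM_13_2 : vZ (⟨13, by norm_num⟩ : Fin 22) (2:Fin 12) = 0 := rfl
lemma vM_13_3 : vZ (⟨13, by norm_num⟩ : Fin 22) (3:Fin 12) = 0 := rfl
lemma vM_13_4 : vZ (⟨13, by norm_num⟩ : Fin 22) (4:Fin 12) = 0 := rfl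
lemma vM_13_5 : vZ (⟨13, by norm_num⟩ : Fin 22) (5:Fin 12) = 1 := rfl
lemma vM_13_6 : vZ (⟨13, by norm_num⟩ : Fin 22) (6:Fin 12) = 0 := rfl
lemma vM_13_7 : vZ (⟨13, by norm_num⟩ : Fin 22) (7:Fin 12) = 1 := rfl
lemma vM_13_8 : vZ (⟨13, by norm_num⟩ : Fin 22) (8:Fin 12) = 0 := rfl
lemma vM_13_9 : vZ (⟨13, by norm_num⟩ : Fin 22) (9:Fin 12) = 0 := rfl
lemma vM_13_10 : vZ (⟨13, by norm_num⟩ : Fin 22) (10:Fin 12) = -1 := rfl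
lemma vM_13_11 : vZ (⟨13, by norm_num⟩ : Fin 22) (11:Fin 12) = 0 := rfl
lemma vM_14_0 : vZ (⟨14, by norm_num⟩ : Fin 22) (0:Fin 12) = 0 := rfl
lemma vM_14_1 : vZ (⟨14, by norm_num⟩ : Fin 22) (1:Fin 12) = 0 := rfl
lemma vM_14_2 : vZ (⟨14, by norm_num⟩ : Fin 22) (2:Fin 12) = 1 := rfl
lemma vM_14_3 : vZ (⟨14, by norm_num⟩ : Fin 22) (3:Fin 12) = 0 := rfl
lemma vM_14_4 : vZ (⟨14, by norm_num⟩ : Fin 22) (4:Fin 12) = 0 := rfl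
lemma vM_14_5 : vZ (⟨14, by norm_num⟩ : Fin 22) (5:Fin 12) = 0 := rfl
lemma vM_14_6 : vZ (⟨14, by norm_num⟩ : Fin 22) (6:Fin 12) = 0 := rfl
lemma vM_14_7 : vZ (⟨14, by norm_num⟩ : Fin 22) (7:Fin 12) = 1 := rfl
lemma vM_14_8 : vZ (⟨14, by norm_num⟩ : Fin 22) (8:Fin 12) = 0 := rfl
lemma vM_14_9 : vZ (⟨14, by norm_num⟩ : Fin 22) (9:Fin 12) = 1 := rfl
lemma vM_14_10 : vZ (⟨14, by norm_num⟩ : Fin 22) (10:Fin 12) = -1 := rfl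
lemma vM_14_11 : vZ (⟨14, by norm_num⟩ : Fin 22) (11:Fin 12) = 0 := rfl
lemma vM_15_0 : vZ (⟨15, by norm_num⟩ : Fin 22) (0:Fin 12) = 0 := rfl
lemma vM_15_1 : vZ (⟨15, by norm_num⟩ : Fin 22) (1:Fin 12) = 0 := rfl
lemma vM_15_2 : vZ (⟨15, by norm_num⟩ : Fin 22) (2:Fin 12) = 0 := rfl
lemma vM_15_3 : vZ (⟨15, by norm_num⟩ : Fin 22) (3:Fin 12) = 0 := rfl
lemma vM_15_4 : vZ (⟨15, by norm_num⟩ : Fin 22) (4:Fin 12) = 1 := rfl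
lemma vM_15_5 : vZ (⟨15, by norm_num⟩ : Fin 22) (5:Fin 12) = 0 := rfl
lemma vM_15_6 : vZ (⟨15, by norm_num⟩ : Fin 22) (6:Fin 12) = 0 := rfl
lemma vM_15_7 : vZ (⟨15, by norm_num⟩ : Fin 22) (7:Fin 12) = 0 := rfl
lemma vM_15_8 : vZ (⟨15, by norm_num⟩ : Fin 22) (8:Fin 12) = 0 := rfl
lemma vM_15_9 : vZ (⟨15, by norm_num⟩ : Fin 22) (9:Fin 12) = 0 := rfl
lemma vM_15_10 : vZ (⟨15, by norm_num⟩ : Fin 22) (10:Fin 12) = 1 := rfl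
lemma vM_15_11 : vZ (⟨15, by norm_num⟩ : Fin 22) (11:Fin 12) = -1 := rfl
lemma vM_16_0 : vZ (⟨16, by norm_num⟩ : Fin 22) (0:Fin 12) = 0 := rfl
lemma vM_16_1 : vZ (⟨16, by norm_num⟩ : Fin 22) (1:Fin 12) = 0 := rfl
lemma vM_16_2 : vZ (⟨16, by norm_num⟩ : Fin 22) (2:Fin 12) = 0 := rfl
lemma vM_16_3 : vZ (⟨16, by norm_num⟩ : Fin 22) (3:Fin 12) = 0 := rfl
lemma vM_16_4 : vZ (⟨16, by norm_num⟩ : Fin 22) (4:Fin 12) = 0 := rfl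
lemma vM_16_5 : vZ (⟨16, by norm_num⟩ : Fin 22) (5:Fin 12) = 0 := rfl
lemma vM_16_6 : vZ (⟨16, by norm_num⟩ : Fin 22) (6:Fin 12) = 0 := rfl
lemma vM_16_7 : vZ (⟨16, by norm_num⟩ : Fin 22) (7:Fin 12) = 1 := rfl
lemma vM_16_8 : vZ (⟨16, by norm_num⟩ : Fin 22) (8:Fin 12) = 1 := rfl
lemma vM_16_9 : vZ (⟨16, by norm_num⟩ : Fin 22) (9:Fin 12) = 0 := rfl
lemma vM_16_10 : vZ (⟨16, by norm_num⟩ : Fin 22) (10:Fin 12) = -1 := rfl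
lemma vM_16_11 : vZ (⟨16, by norm_num⟩ : Fin 22) (11:Fin 12) = 0 := rfl
lemma vM_17_0 : vZ (⟨17, by norm_num⟩ : Fin 22) (0:Fin 12) = 0 := rfl
lemma vM_17_1 : vZ (⟨17, by norm_num⟩ : Fin 22) (1:Fin 12) = 1 := rfl
lemma vM_17_2 : vZ (⟨17, by norm_num⟩ : Fin 22) (2:Fin 12) = 0 := rfl
lemma vM_17_3 : vZ (⟨17, by norm_num⟩ : Fin 22) (3:Fin 12) = 1 := rfl
lemma vM_17_4 : vZ (⟨17, by norm_num⟩ : Fin 22) (4:Fin 12) = 0 := rfl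
lemma vM_17_5 : vZ (⟨17, by norm_num⟩ : Fin 22) (5:Fin 12) = 1 := rfl
lemma vM_17_6 : vZ (⟨17, by norm_num⟩ : Fin 22) (6:Fin 12) = 0 := rfl
lemma vM_17_7 : vZ (⟨17, by norm_num⟩ : Fin 22) (7:Fin 12) = 0 := rfl
lemma vM_17_8 : vZ (⟨17, by norm_num⟩ : Fin 22) (8:Fin 12) = -1 := rfl
lemma vM_17_9 : vZ (⟨17, by norm_num⟩ : Fin 22) (9:Fin 12) = 0 := rfl
lemma vM_17_10 : vZ (⟨17, by norm_num⟩ : Fin 22) (10:Fin 12) = 1 := rfl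
lemma vM_17_11 : vZ (⟨17, by norm_num⟩ : Fin 22) (11:Fin 12) = 0 := rfl
lemma vM_18_0 : vZ (⟨18, by norm_num⟩ : Fin 22) (0:Fin 12) = 0 := rfl
lemma vM_18_1 : vZ (⟨18, by norm_num⟩ : Fin 22) (1:Fin 12) = 0 := rfl
lemma vM_18_2 : vZ (⟨18, by norm_num⟩ : Fin 22) (2:Fin 12) = 0 := rfl
lemma vM_18_3 : vZ (⟨18, by norm_num⟩ : Fin 22) (3:Fin 12) = 1 := rfl
lemma vM_18_4 : vZ (⟨18, by norm_num⟩ : Fin 22) (4:Fin 12) = 0 := rfl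
lemma vM_18_5 : vZ (⟨18, by norm_num⟩ : Fin 22) (5:Fin 12) = 0 := rfl
lemma vM_18_6 : vZ (⟨18, by norm_num⟩ : Fin 22) (6:Fin 12) = 0 := rfl
lemma vM_18_7 : vZ (⟨18, by norm_num⟩ : Fin 22) (7:Fin 12) = 0 := rfl
lemma vM_18_8 : vZ (⟨18, by norm_num⟩ : Fin 22) (8:Fin 12) = 0 := rfl
lemma vM_18_9 : vZ (⟨18, by norm_num⟩ : Fin 22) (9:Fin 12) = 0 := rfl
lemma vM_18_10 : vZ (⟨18, by norm_num⟩ : Fin 22) (10:Fin 12) = 0 := rfl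
lemma vM_18_11 : vZ (⟨18, by norm_num⟩ : Fin 22) (11:Fin 12) = 1 := rfl
lemma vM_19_0 : vZ (⟨19, by norm_num⟩ : Fin 22) (0:Fin 12) = 0 := rfl
lemma vM_19_1 : vZ (⟨19, by norm_num⟩ : Fin 22) (1:Fin 12) = 0 := rfl
lemma vM_19_2 : vZ (⟨19, by norm_num⟩ : Fin 22) (2:Fin 12) = 1 := rfl
lemma vM_19_3 : vZ (⟨19, by norm_num⟩ : Fin 22) (3:Fin 12) = 0 := rfl
lemma vM_19_4 : vZ (⟨19, by norm_num⟩ : Fin 22) (4:Fin 12) = 0 := rfl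
lemma vM_19_5 : vZ (⟨19, by norm_num⟩ : Fin 22) (5:Fin 12) = 0 := rfl
lemma vM_19_6 : vZ (⟨19, by norm_num⟩ : Fin 22) (6:Fin 12) = 0 := rfl
lemma vM_19_7 : vZ (⟨19, by norm_num⟩ : Fin 22) (7:Fin 12) = 0 := rfl
lemma vM_19_8 : vZ (⟨19, by norm_num⟩ : Fin 22) (8:Fin 12) = 0 := rfl
lemma vM_19_9 : vZ (⟨19, by norm_num⟩ : Fin 22) (9:Fin 12) = 1 := rfl
lemma vM_19_10 : vZ (⟨19, by norm_num⟩ : Fin 22) (10:Fin 12) = 0 := rfl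
lemma vM_19_11 : vZ (⟨19, by norm_num⟩ : Fin 22) (11:Fin 12) = 0 := rfl
lemma vM_20_0 : vZ (⟨20, by norm_num⟩ : Fin 22) (0:Fin 12) = 0 := rfl
lemma vM_20_1 : vZ (⟨20, by norm_num⟩ : Fin 22) (1:Fin 12) = 0 := rfl
lemma vM_20_2 : vZ (⟨20, by norm_num⟩ : Fin 22) (2:Fin 12) = 0 := rfl
lemma vM_20_3 : vZ (⟨20, by norm_num⟩ : Fin 22) (3:Fin 12) = 0 := rfl
lemma vM_20_4 : vZ (⟨20, by norm_num⟩ : Fin 22) (4:Fin 12) = 1 := rfl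
lemma vM_20_5 : vZ (⟨20, by norm_num⟩ : Fin 22) (5:Fin 12) = 0 := rfl
lemma vM_20_6 : vZ (⟨20, by norm_num⟩ : Fin 22) (6:Fin 12) = 0 := rfl
lemma vM_20_7 : vZ (⟨20, by norm_num⟩ : Fin 22) (7:Fin 12) = 0 := rfl
lemma vM_20_8 : vZ (⟨20, by norm_num⟩ : Fin 22) (8:Fin 12) = 0 := rfl
lemma vM_20_9 : vZ (⟨20, by norm_num⟩ : Fin 22) (9:Fin 12) = 0 := rfl
lemma vM_20_10 : vZ (⟨20, by norm_num⟩ : Fin 22) (10:Fin 12) = 0 := rfl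
lemma vM_20_11 : vZ (⟨20, by norm_num⟩ : Fin 22) (11:Fin 12) = -1 := rfl
lemma vM_21_0 : vZ (⟨21, by norm_num⟩ : Fin 22) (0:Fin 12) = 0 := rfl
lemma vM_21_1 : vZ (⟨21, by norm_num⟩ : Fin 22) (1:Fin 12) = 0 := rfl
lemma vM_21_2 : vZ (⟨21, by norm_num⟩ : Fin 22) (2:Fin 12) = 0 := rfl
lemma vM_21_3 : vZ (⟨21, by norm_num⟩ : Fin 22) (3:Fin 12) = 0 := rfl
lemma vM_21_4 : vZ (⟨21, by norm_num⟩ : Fin 22) (4:Fin 12) = 0 := rfl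
lemma vM_21_5 : vZ (⟨21, by norm_num⟩ : Fin 22) (5:Fin 12) = 1 := rfl
lemma vM_21_6 : vZ (⟨21, by norm_num⟩ : Fin 22) (6:Fin 12) = 0 := rfl
lemma vM_21_7 : vZ (⟨21, by norm_num⟩ : Fin 22) (7:Fin 12) = 0 := rfl
lemma vM_21_8 : vZ (⟨21, by norm_num⟩ : Fin 22) (8:Fin 12) = 0 := rfl
lemma vM_21_9 : vZ (⟨21, by norm_num⟩ : Fin 22) (9:Fin 12) = -1 := rfl
lemma vM_21_10 : vZ (⟨21, by norm_num⟩ : Fin 22) (10:Fin 12) = 0 := rfl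
lemma vM_21_11 : vZ (⟨21, by norm_num⟩ : Fin 22) (11:Fin 12) = 0 := rfl
set_option maxHeartbeats 1000000 in
lemma key (p : Fin 22 → ℕ) (k : Fin 22) (h : ∀ j : Fin 12, ∑ i, (p i : ℤ) * vZ i j = vZ k j) :
    ∑ i, p i ≤ 1 := by
  have H0 := h 0; have H1 := h 1; have H2 := h 2; have H3 := h 3
  have H4 := h 4; have H5 := h 5; have H6 := h 6; have H7 := h 7
  have H8 := h 8; have H9 := h 9; have H10 := h 10; have H11 := h 11
  rw [sum22] at H0 H1 H2 H3 H4 H5 H6 H7 H8 H9 H10 H11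
  rw [sum22]
  simp only [vE_0_0, vE_1_0, vE_2_0, vE_3_0, vE_4_0, vE_5_0, vE_6_0, vE_7_0, vE_8_0, vE_9_0, vE_10_0, vE_11_0, vE_12_0, vE_13_0, vE_14_0, vE_15_0, vE_16_0, vE_17_0, vE_18_0, vE_19_0, vE_20_0, vE_21_0,
    vE_0_1, vE_1_1, vE_2_1, vE_3_1, vE_4_1, vE_5_1, vE_6_1, vE_7_1, vE_8_1, vE_9_1, vE_10_1, vE_11_1, vE_12_1, vE_13_1, vE_14_1, vE_15_1, vE_16_1, vE_17_1, vE_18_1, vE_19_1, vE_20_1, vE_21_1,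
    vE_0_2, vE_1_2, vE_2_2, vE_3_2, vE_4_2, vE_5_2, vE_6_2, vE_7_2, vE_8_2, vE_9_2, vE_10_2, vE_11_2, vE_12_2, vE_13_2, vE_14_2, vE_15_2, vE_16_2, vE_17_2, vE_18_2, vE_19_2, vE_20_2, vE_21_2,
    vE_0_3, vE_1_3, vE_2_3, vE_3_3, vE_4_3, vE_5_3, vE_6_3, vE_7_3, vE_8_3, vE_9_3, vE_10_3, vE_11_3, vE_12_3, vE_13_3, vE_14_3, vE_15_3, vE_16_3, vE_17_3, vE_18_3, vE_19_3, vE_20_3, vE_21_3,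
    vE_0_4, vE_1_4, vE_2_4, vE_3_4, vE_4_4, vE_5_4, vE_6_4, vE_7_4, vE_8_4, vE_9_4, vE_10_4, vE_11_4, vE_12_4, vE_13_4, vE_14_4, vE_15_4, vE_16_4, vE_17_4, vE_18_4, vE_19_4, vE_20_4, vE_21_4,
    vE_0_5, vE_1_5, vE_2_5, vE_3_5, vE_4_5, vE_5_5, vE_6_5, vE_7_5, vE_8_5, vE_9_5, vE_10_5, vE_11_5, vE_12_5, vE_13_5, vE_14_5, vE_15_5, vE_16_5, vE_17_5, vE_18_5, vE_19_5, vE_20_5, vE_21_5,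
    vE_0_6, vE_1_6, vE_2_6, vE_3_6, vE_4_6, vE_5_6, vE_6_6, vE_7_6, vE_8_6, vE_9_6, vE_10_6, vE_11_6, vE_12_6, vE_13_6, vE_14_6, vE_15_6, vE_16_6, vE_17_6, vE_18_6, vE_19_6, vE_20_6, vE_21_6,
    vE_0_7, vE_1_7, vE_2_7, vE_3_7, vE_4_7, vE_5_7, vE_6_7, vE_7_7, vE_8_7, vE_9_7, vE_10_7, vE_11_7, vE_12_7, vE_13_7, vE_14_7, vE_15_7, vE_16_7, vE_17_7, vE_18_7, vE_19_7, vE_20_7, vE_21_7,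
    vE_0_8, vE_1_8, vE_2_8, vE_3_8, vE_4_8, vE_5_8, vE_6_8, vE_7_8, vE_8_8, vE_9_8, vE_10_8, vE_11_8, vE_12_8, vE_13_8, vE_14_8, vE_15_8, vE_16_8, vE_17_8, vE_18_8, vE_19_8, vE_20_8, vE_21_8,
    vE_0_9, vE_1_9, vE_2_9, vE_3_9, vE_4_9, vE_5_9, vE_6_9, vE_7_9, vE_8_9, vE_9_9, vE_10_9, vE_11_9, vE_12_9, vE_13_9, vE_14_9, vE_15_9, vE_16_9, vE_17_9, vE_18_9, vE_19_9, vE_20_9, vE_21_9,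
    vE_0_10, vE_1_10, vE_2_10, vE_3_10, vE_4_10, vE_5_10, vE_6_10, vE_7_10, vE_8_10, vE_9_10, vE_10_10, vE_11_10, vE_12_10, vE_13_10, vE_14_10, vE_15_10, vE_16_10, vE_17_10, vE_18_10, vE_19_10, vE_20_10, vE_21_10,
    vE_0_11, vE_1_11, vE_2_11, vE_3_11, vE_4_11, vE_5_11, vE_6_11, vE_7_11, vE_8_11, vE_9_11, vE_10_11, vE_11_11, vE_12_11, vE_13_11, vE_14_11, vE_15_11, vE_16_11, vE_17_11, vE_18_11, vE_19_11, vE_20_11, vE_21_11,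
    mul_zero, mul_one, mul_neg_one, add_zero, zero_add] at H0 H1 H2 H3 H4 H5 H6 H7 H8 H9 H10 H11
  fin_cases k
  · simp only [vM_0_0, vM_0_1, vM_0_2, vM_0_3, vM_0_4, vM_0_5, vM_0_6, vM_0_7, vM_0_8, vM_0_9, vM_0_10, vM_0_11] at H0 H1 H2 H3 H4 H5 H6 H7 H8 H9 H10 H11; omega
  · simp only [vM_1_0, vM_1_1, vM_1_2, vM_1_3, vM_1_4, vM_1_5, vM_1_6, vM_1_7, vM_1_8, vM_1_9, vM_1_10, vM_1_11] at H0 H1 H2 H3 H4 H5 H6 H7 H8 H9 H10 H11; omega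
  · simp only [vM_2_0, vM_2_1, vM_2_2, vM_2_3, vM_2_4, vM_2_5, vM_2_6, vM_2_7, vM_2_8, vM_2_9, vM_2_10, vM_2_11] at H0 H1 H2 H3 H4 H5 H6 H7 H8 H9 H10 H11; omega
  · simp only [vM_3_0, vM_3_1, vM_3_2, vM_3_3, vM_3_4, vM_3_5, vM_3_6, vM_3_7, vM_3_8, vM_3_9, vM_3_10, vM_3_11] at H0 H1 H2 H3 H4 H5 H6 H7 H8 H9 H10 H11; omega
  · simp only [vM_4_0, vM_4_1, vM_4_2, vM_4_3, vM_4_4, vM_4_5, vM_4_6, vM_4_7, vM_4_8, vM_4_9, vM_4_10, vM_4_11] at H0 H1 H2 H3 H4 H5 H6 H7 H8 H9 H10 H11; omega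
  · simp only [vM_5_0, vM_5_1, vM_5_2, vM_5_3, vM_5_4, vM_5_5, vM_5_6, vM_5_7, vM_5_8, vM_5_9, vM_5_10, vM_5_11] at H0 H1 H2 H3 H4 H5 H6 H7 H8 H9 H10 H11; omega
  · simp only [vM_6_0, vM_6_1, vM_6_2, vM_6_3, vM_6_4, vM_6_5, vM_6_6, vM_6_7, vM_6_8, vM_6_9, vM_6_10, vM_6_11] at H0 H1 H2 H3 H4 H5 H6 H7 H8 H9 H10 H11; omega
  · simp only [vM_7_0, vM_7_1, vM_7_2, vM_7_3, vM_7_4, vM_7_5, vM_7_6, vM_7_7, vM_7_8, vM_7_9, vM_7_10, vM_7_11] at H0 H1 H2 H3 H4 H5 H6 H7 H8 H9 H10 H11; omega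
  · simp only [vM_8_0, vM_8_1, vM_8_2, vM_8_3, vM_8_4, vM_8_5, vM_8_6, vM_8_7, vM_8_8, vM_8_9, vM_8_10, vM_8_11] at H0 H1 H2 H3 H4 H5 H6 H7 H8 H9 H10 H11; omega
  · simp only [vM_9_0, vM_9_1, vM_9_2, vM_9_3, vM_9_4, vM_9_5, vM_9_6, vM_9_7, vM_9_8, vM_9_9, vM_9_10, vM_9_11] at H0 H1 H2 H3 H4 H5 H6 H7 H8 H9 H10 H11; omega
  · simp only [vM_10_0, vM_10_1, vM_10_2, vM_10_3, vM_10_4, vM_10_5, vM_10_6, vM_10_7, vM_10_8, vM_10_9, vM_10_10, vM_10_11] at H0 H1 H2 H3 H4 H5 H6 H7 H8 H9 H10 H11; omega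
  · simp only [vM_11_0, vM_11_1, vM_11_2, vM_11_3, vM_11_4, vM_11_5, vM_11_6, vM_11_7, vM_11_8, vM_11_9, vM_11_10, vM_11_11] at H0 H1 H2 H3 H4 H5 H6 H7 H8 H9 H10 H11; omega
  · simp only [vM_12_0, vM_12_1, vM_12_2, vM_12_3, vM_12_4, vM_12_5, vM_12_6, vM_12_7, vM_12_8, vM_12_9, vM_12_10, vM_12_11] at H0 H1 H2 H3 H4 H5 H6 H7 H8 H9 H10 H11; omega
  · simp only [vM_13_0, vM_13_1, vM_13_2, vM_13_3, vM_13_4, vM_13_5, vM_13_6, vM_13_7, vM_13_8, vM_13_9, vM_13_10, vM_13_11] at H0 H1 H2 H3 H4 H5 H6 H7 H8 H9 H10 H11; omega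
  · simp only [vM_14_0, vM_14_1, vM_14_2, vM_14_3, vM_14_4, vM_14_5, vM_14_6, vM_14_7, vM_14_8, vM_14_9, vM_14_10, vM_14_11] at H0 H1 H2 H3 H4 H5 H6 H7 H8 H9 H10 H11; omega
  · simp only [vM_15_0, vM_15_1, vM_15_2, vM_15_3, vM_15_4, vM_15_5, vM_15_6, vM_15_7, vM_15_8, vM_15_9, vM_15_10, vM_15_11] at H0 H1 H2 H3 H4 H5 H6 H7 H8 H9 H10 H11; omega
  · simp only [vM_16_0, vM_16_1, vM_16_2, vM_16_3, vM_16_4, vM_16_5, vM_16_6, vM_16_7, vM_16_8, vM_16_9, vM_16_10, vM_16_11] at H0 H1 H2 H3 H4 H5 H6 H7 H8 H9 H10 H11; omega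
  · simp only [vM_17_0, vM_17_1, vM_17_2, vM_17_3, vM_17_4, vM_17_5, vM_17_6, vM_17_7, vM_17_8, vM_17_9, vM_17_10, vM_17_11] at H0 H1 H2 H3 H4 H5 H6 H7 H8 H9 H10 H11; omega
  · simp only [vM_18_0, vM_18_1, vM_18_2, vM_18_3, vM_18_4, vM_18_5, vM_18_6, vM_18_7, vM_18_8, vM_18_9, vM_18_10, vM_18_11] at H0 H1 H2 H3 H4 H5 H6 H7 H8 H9 H10 H11; omega
  · simp only [vM_19_0, vM_19_1, vM_19_2, vM_19_3, vM_19_4, vM_19_5, vM_19_6, vM_19_7, vM_19_8, vM_19_9, vM_19_10, vM_19_11] at H0 H1 H2 H3 H4 H5 H6 H7 H8 H9 H10 H11; omega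
  · simp only [vM_20_0, vM_20_1, vM_20_2, vM_20_3, vM_20_4, vM_20_5, vM_20_6, vM_20_7, vM_20_8, vM_20_9, vM_20_10, vM_20_11] at H0 H1 H2 H3 H4 H5 H6 H7 H8 H9 H10 H11; omega
  · simp only [vM_21_0, vM_21_1, vM_21_2, vM_21_3, vM_21_4, vM_21_5, vM_21_6, vM_21_7, vM_21_8, vM_21_9, vM_21_10, vM_21_11] at H0 H1 H2 H3 H4 H5 H6 H7 H8 H9 H10 H11; omega

lemma repr_exists {x : Fin 12 → ℤ}
    (hx : x ∈ AddSubmonoid.closure (Set.range vZ)) :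
    ∃ p : Fin 22 → ℕ, ∀ j, ∑ i, (p i : ℤ) * vZ i j = x j := by
  induction hx using AddSubmonoid.closure_induction with
  | mem x hxm =>
    obtain ⟨t, rfl⟩ := hxm
    refine ⟨fun i => if i = t then 1 else 0, fun j => ?_⟩
    simp [apply_ite, Finset.sum_ite_eq']
  | zero => exact ⟨0, fun j => by simp⟩
  | add x y hx hy ihx ihy =>
    obtain ⟨p, hp⟩ := ihx
    obtain ⟨q, hq⟩ := ihy
    refine ⟨p + q, fun j => ?_⟩
    have := hp j
    have := hq j
    simp only [Pi.add_apply]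
    push_cast
    simp only [add_mul, Finset.sum_add_distrib]
    omega

lemma vZ_ne_zero : ∀ k : Fin 22, vZ k ≠ 0 := by decide


/-- For the additive submonoid `M ⊆ ℤ^12` generated by `{v_1,…,v_22}`, the
set of irreducible elements of `M` (nonzero elements not expressible as a sum of two
nonzero elements of `M`) is exactly `{v_1,…,v_22}`. -/
theorem stmt_18 (M : AddSubmonoid (Fin 12 → ℤ))
    (hM : M = AddSubmonoid.closure (Set.range vZ)) :
    {x : Fin 12 → ℤ | x ∈ M ∧ x ≠ 0 ∧
      ¬ ∃ a ∈ M, ∃ b ∈ M, a ≠ 0 ∧ b ≠ 0 ∧ x = a + b} = Set.range vZ := by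
  subst hM
  ext x
  constructor
  · rintro ⟨hxM, hx0, hxirr⟩
    have Q : x ∈ Set.range vZ ∨ x = 0 ∨
        ∃ a ∈ AddSubmonoid.closure (Set.range vZ), ∃ b ∈ AddSubmonoid.closure (Set.range vZ),
          a ≠ 0 ∧ b ≠ 0 ∧ x = a + b := by
      clear hx0 hxirr
      induction hxM using AddSubmonoid.closure_induction with
      | mem y hy => exact Or.inl hy
      | zero => exact Or.inr (Or.inl rfl)
      | add a b ha hb iha ihb =>
        by_cases ha0 : a = 0
        · subst ha0; simpa using ihb
        by_cases hb0 : b = 0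
        · subst hb0; simpa using iha
        exact Or.inr (Or.inr ⟨a, ha, b, hb, ha0, hb0, rfl⟩)
    rcases Q with h | h | h
    · exact h
    · exact absurd h hx0
    · exact absurd h hxirr
  · rintro ⟨k, rfl⟩
    refine ⟨AddSubmonoid.subset_closure ⟨k, rfl⟩, vZ_ne_zero k, ?_⟩
    rintro ⟨a, ha, b, hb, ha0, hb0, hab⟩
    obtain ⟨p, hp⟩ := repr_exists ha
    obtain ⟨q, hq⟩ := repr_exists hb
    have hpq : ∀ j, ∑ i, ((p + q) i : ℤ) * vZ i j = vZ k j := by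
      intro j
      have h1 := hp j
      have h2 := hq j
      have h3 : vZ k j = a j + b j := by rw [hab]; rfl
      simp only [Pi.add_apply]
      push_cast
      simp only [add_mul, Finset.sum_add_distrib]
      omega
    have hle := key (p + q) k hpq
    have hp1 : 1 ≤ ∑ i, p i := by
      by_contra h
      push_neg at h
      interval_cases hs : (∑ i, p i)
      · have hall : ∀ i, p i = 0 := by
          intro i
          have := Finset.sum_eq_zero_iff.mp hs i (Finset.mem_univ i)
          exact this
        apply ha0
        funext j
        have := hp j
        simp [hall] at this
        exact this.symm
    have hq1 : 1 ≤ ∑ i, q i := by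
      by_contra h
      push_neg at h
      interval_cases hs : (∑ i, q i)
      · have hall : ∀ i, q i = 0 := by
          intro i
          exact Finset.sum_eq_zero_iff.mp hs i (Finset.mem_univ i)
        apply hb0
        funext j
        have := hq j
        simp [hall] at this
        exact this.symm
    have hsum : ∑ i, (p + q) i = ∑ i, p i + ∑ i, q i := by
      simp [Finset.sum_add_distrib]
    omega
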